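/- arXiv:2211.07935 — 2 statements merged into one kernel-verified Lean document; each statement's English description precedes it below -/
import Mathlib

section
/- Let X and Y be real normed spaces, α, β ∈ [0,1) with 0 < α+β < 1, and T : X → Y a nonzero bounded linear operator satisfying ‖Tu‖ = ‖T‖·‖u‖ for all u ∈ X. Then ρ_{α,β}(Tu, Tv) = ‖T‖² ρ_{α,β}(u,v) for all u, v ∈ X; in particular T preserves ρ_{α,β}-orthogonality. -/
noncomputable def rhoP {X : Type*} [NormedAddCommGroup X] [NormedSpace ℝ X] (u v : X) : ℝ :=
  Filter.limUnder (nhdsWithin (0:ℝ) (Set.Ioi 0)) (fun t : ℝ => (‖u + t • v‖^2 - ‖u‖^2) / (2*t))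

noncomputable def rhoM {X : Type*} [NormedAddCommGroup X] [NormedSpace ℝ X] (u v : X) : ℝ :=
  Filter.limUnder (nhdsWithin (0:ℝ) (Set.Iio 0)) (fun t : ℝ => (‖u + t • v‖^2 - ‖u‖^2) / (2*t))

noncomputable def rhoAB {X : Type*} [NormedAddCommGroup X] [NormedSpace ℝ X]
    (α β : ℝ) (u v : X) : ℝ := α * rhoM u v + β * rhoP u v

section aux

variable {X : Type*} [NormedAddCommGroup X] [NormedSpace ℝ X]

private lemma convexOn_normsq (u v : X) :
    ConvexOn ℝ Set.univ (fun t : ℝ => ‖u + t • v‖ ^ 2) := by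
  have h1 : ConvexOn ℝ Set.univ (fun t : ℝ => ‖u + t • v‖) := by
    have h := (convexOn_univ_norm (E := X)).comp_affineMap (AffineMap.lineMap u (u + v))
    have : (AffineMap.lineMap u (u + v) : ℝ →ᵃ[ℝ] X) ⁻¹' Set.univ = Set.univ := by simp
    rw [this] at h
    convert h using 2 with t
    any_goals rfl
    simp [AffineMap.lineMap_apply, add_comm]
  simpa [Pi.pow_def] using h1.pow (fun x _ => norm_nonneg _) (n := 2)

private lemma quot_eq_slope (u v : X) :
    (fun t : ℝ => (‖u + t • v‖^2 - ‖u‖^2) / (2*t)) =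
      fun t : ℝ => (1/2) * slope (fun t : ℝ => ‖u + t • v‖ ^ 2) 0 t := by
  funext t
  rw [slope_def_field]
  rcases eq_or_ne t 0 with rfl | h
  · simp
  · field_simp
    simp [mul_comm]

private lemma slope_monoOn (u v : X) :
    MonotoneOn (slope (fun t : ℝ => ‖u + t • v‖ ^ 2) 0) (Set.univ \ {0}) :=
  (convexOn_normsq u v).slope_mono (Set.mem_univ 0)

private lemma tendsto_rhoP (u v : X) :
    Filter.Tendsto (fun t : ℝ => (‖u + t • v‖^2 - ‖u‖^2) / (2*t))
      (nhdsWithin (0:ℝ) (Set.Ioi 0)) (nhds (rhoP u v)) := by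
  set q : ℝ → ℝ := fun t => (‖u + t • v‖^2 - ‖u‖^2) / (2*t) with hq
  have hmono : MonotoneOn q (Set.Ioi (0:ℝ)) := by
    rw [hq, quot_eq_slope]
    intro a ha b hb hab
    have := slope_monoOn u v ⟨trivial, ne_of_gt ha⟩ ⟨trivial, ne_of_gt hb⟩ hab
    nlinarith
  have hbdd : BddBelow (q '' Set.Ioi (0:ℝ)) := by
    refine ⟨q (-1), ?_⟩
    rintro x ⟨t, ht, rfl⟩
    rw [hq, quot_eq_slope]
    have := slope_monoOn u v (a := -1) (b := t) ⟨trivial, by norm_num⟩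
      ⟨trivial, ne_of_gt ht⟩ (by linarith [Set.mem_Ioi.mp ht])
    dsimp only
    nlinarith
  have h := hmono.tendsto_nhdsGT hbdd
  have : rhoP u v = sInf (q '' Set.Ioi 0) := h.limUnder_eq
  rwa [this]

private lemma tendsto_rhoM (u v : X) :
    Filter.Tendsto (fun t : ℝ => (‖u + t • v‖^2 - ‖u‖^2) / (2*t))
      (nhdsWithin (0:ℝ) (Set.Iio 0)) (nhds (rhoM u v)) := by
  set q : ℝ → ℝ := fun t => (‖u + t • v‖^2 - ‖u‖^2) / (2*t) with hq
  have hmono : MonotoneOn q (Set.Iio (0:ℝ)) := by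
    rw [hq, quot_eq_slope]
    intro a ha b hb hab
    have := slope_monoOn u v ⟨trivial, ne_of_lt ha⟩ ⟨trivial, ne_of_lt hb⟩ hab
    nlinarith
  have hbdd : BddAbove (q '' Set.Iio (0:ℝ)) := by
    refine ⟨q 1, ?_⟩
    rintro x ⟨t, ht, rfl⟩
    rw [hq, quot_eq_slope]
    have := slope_monoOn u v (a := t) (b := 1) ⟨trivial, ne_of_lt ht⟩
      ⟨trivial, by norm_num⟩ (by linarith [Set.mem_Iio.mp ht])
    dsimp only
    nlinarith
  have h := hmono.tendsto_nhdsLT hbdd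
  have : rhoM u v = sSup (q '' Set.Iio 0) := h.limUnder_eq
  rwa [this]

end aux

theorem stmt_14 {X Y : Type*} [NormedAddCommGroup X] [NormedSpace ℝ X]
    [NormedAddCommGroup Y] [NormedSpace ℝ Y]
    (α β : ℝ) (hα : α ∈ Set.Ico (0:ℝ) 1) (hβ : β ∈ Set.Ico (0:ℝ) 1)
    (hab : 0 < α + β) (hab1 : α + β < 1)
    (T : X →L[ℝ] Y) (hT : T ≠ 0) (hiso : ∀ u : X, ‖T u‖ = ‖T‖ * ‖u‖) :
    (∀ u v : X, rhoAB α β (T u) (T v) = ‖T‖^2 * rhoAB α β u v) ∧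
    (∀ u v : X, rhoAB α β u v = 0 → rhoAB α β (T u) (T v) = 0) := by
  have key : ∀ u v : X, (fun t : ℝ => (‖T u + t • T v‖^2 - ‖T u‖^2) / (2*t)) =
      fun t : ℝ => ‖T‖^2 * ((‖u + t • v‖^2 - ‖u‖^2) / (2*t)) := by
    intro u v
    funext t
    have h1 : T u + t • T v = T (u + t • v) := by simp [map_add, map_smul]
    rw [h1, hiso, hiso]
    ring
  have hP : ∀ u v : X, rhoP (T u) (T v) = ‖T‖^2 * rhoP u v := by
    intro u v
    have h := (tendsto_rhoP u v).const_mul (‖T‖^2)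
    have : Filter.Tendsto (fun t : ℝ => (‖T u + t • T v‖^2 - ‖T u‖^2) / (2*t))
        (nhdsWithin (0:ℝ) (Set.Ioi 0)) (nhds (‖T‖^2 * rhoP u v)) := by
      rw [key u v]; exact h
    exact this.limUnder_eq
  have hM : ∀ u v : X, rhoM (T u) (T v) = ‖T‖^2 * rhoM u v := by
    intro u v
    have h := (tendsto_rhoM u v).const_mul (‖T‖^2)
    have : Filter.Tendsto (fun t : ℝ => (‖T u + t • T v‖^2 - ‖T u‖^2) / (2*t))
        (nhdsWithin (0:ℝ) (Set.Iio 0)) (nhds (‖T‖^2 * rhoM u v)) := by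
      rw [key u v]; exact h
    exact this.limUnder_eq
  have main : ∀ u v : X, rhoAB α β (T u) (T v) = ‖T‖^2 * rhoAB α β u v := by
    intro u v
    rw [rhoAB, rhoAB, hP, hM]
    ring
  exact ⟨main, fun u v h => by rw [main u v, h, mul_zero]⟩
end

section
/- Let X be a real normed space, α, β ∈ [0,1) with 0 < α+β < 1, and suppose a nonzero bounded linear operator T : X → Y preserves ρ_{α,β}-orthogonality (ρ_{α,β}(u,v) = 0 implies ρ_{α,β}(Tu,Tv) = 0). Then T is injective. -/
open Filter Set Topology

section Aux

variable {X : Type*} [NormedAddCommGroup X] [NormedSpace ℝ X]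

lemma myConvexF (y x : X) : ConvexOn ℝ Set.univ (fun t : ℝ => ‖y + t • x‖^2) := by
  have h1 : ConvexOn ℝ Set.univ (fun t : ℝ => ‖y + t • x‖) := by
    have := (convexOn_univ_norm (E := X)).comp_affineMap (AffineMap.lineMap y (y + x))
    have e : (fun t : ℝ => ‖y + t • x‖) = norm ∘ (AffineMap.lineMap y (y + x)) := by
      ext t
      simp [Function.comp, AffineMap.lineMap_apply, add_comm]
    rw [e]
    exact this.subset (Set.subset_univ _) (convex_univ)
  have := h1.pow (n := 2) (fun t _ => norm_nonneg _)
  exact this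

lemma q_eq_slope (u v : X) {t : ℝ} (_ : t ≠ 0) :
    (‖u + t • v‖^2 - ‖u‖^2) / (2*t)
      = slope (fun t : ℝ => ‖u + t • v‖^2) 0 t / 2 := by
  rw [slope_def_field, sub_zero]
  simp only [zero_smul, add_zero]
  rw [div_div, mul_comm]

lemma rhoP_tendsto (u v : X) :
    Tendsto (fun t : ℝ => (‖u + t • v‖^2 - ‖u‖^2) / (2*t)) (𝓝[>] (0:ℝ)) (𝓝 (rhoP u v)) := by
  set F : ℝ → ℝ := fun t => ‖u + t • v‖^2 with hF
  have hconv := myConvexF u v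
  set G : ℝ → ℝ := fun t => slope F 0 t / 2 with hG
  have hmono : MonotoneOn G (Ioi (0:ℝ)) := by
    intro a ha b hb hab
    have := hconv.secant_mono (a := 0) (x := a) (y := b) (mem_univ _) (mem_univ _) (mem_univ _)
      (ne_of_gt ha) (ne_of_gt hb) hab
    simp only [hG, hF, slope_def_field, sub_zero] at this ⊢
    linarith
  have hbdd : BddBelow (G '' Ioi (0:ℝ)) := by
    refine ⟨G (-1), ?_⟩
    rintro _ ⟨t, ht, rfl⟩
    have := hconv.secant_mono (a := 0) (x := -1) (y := t) (mem_univ _) (mem_univ _) (mem_univ _)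
      (by norm_num) (ne_of_gt ht) (by linarith [mem_Ioi.mp ht])
    simp only [hG, hF, slope_def_field, sub_zero] at this ⊢
    linarith
  have hten := hmono.tendsto_nhdsGT hbdd
  have heq : (fun t : ℝ => (‖u + t • v‖^2 - ‖u‖^2) / (2*t)) =ᶠ[𝓝[>] (0:ℝ)] G := by
    filter_upwards [self_mem_nhdsWithin] with t ht
    exact q_eq_slope u v (ne_of_gt (mem_Ioi.mp ht))
  have hten2 := hten.congr' heq.symm
  rwa [rhoP, hten2.limUnder_eq]

lemma rhoM_tendsto (u v : X) :
    Tendsto (fun t : ℝ => (‖u + t • v‖^2 - ‖u‖^2) / (2*t)) (𝓝[<] (0:ℝ)) (𝓝 (rhoM u v)) := by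
  set F : ℝ → ℝ := fun t => ‖u + t • v‖^2 with hF
  have hconv := myConvexF u v
  set G : ℝ → ℝ := fun t => slope F 0 t / 2 with hG
  have hmono : MonotoneOn G (Iio (0:ℝ)) := by
    intro a ha b hb hab
    have := hconv.secant_mono (a := 0) (x := a) (y := b) (mem_univ _) (mem_univ _) (mem_univ _)
      (ne_of_lt ha) (ne_of_lt hb) hab
    simp only [hG, hF, slope_def_field, sub_zero] at this ⊢
    linarith
  have hbdd : BddAbove (G '' Iio (0:ℝ)) := by
    refine ⟨G 1, ?_⟩
    rintro _ ⟨t, ht, rfl⟩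
    have := hconv.secant_mono (a := 0) (x := t) (y := 1) (mem_univ _) (mem_univ _) (mem_univ _)
      (ne_of_lt ht) (by norm_num) (by linarith [mem_Iio.mp ht])
    simp only [hG, hF, slope_def_field, sub_zero] at this ⊢
    linarith
  have hten := hmono.tendsto_nhdsLT hbdd
  have heq : (fun t : ℝ => (‖u + t • v‖^2 - ‖u‖^2) / (2*t)) =ᶠ[𝓝[<] (0:ℝ)] G := by
    filter_upwards [self_mem_nhdsWithin] with t ht
    exact q_eq_slope u v (ne_of_lt (mem_Iio.mp ht))
  have hten2 := hten.congr' heq.symm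
  rwa [rhoM, hten2.limUnder_eq]

lemma q_translate (u v : X) (s t : ℝ) (ht : t ≠ 0) (h1 : 0 < 1 + t*s) :
    (‖u + t • (s • u + v)‖^2 - ‖u‖^2) / (2*t)
      = (1+t*s) * ((‖u + (t/(1+t*s)) • v‖^2 - ‖u‖^2) / (2*(t/(1+t*s)))) + (s + t*s^2/2)*‖u‖^2 := by
  have h1' : (1+t*s) ≠ 0 := ne_of_gt h1
  have hvec : u + t • (s • u + v) = (1+t*s) • (u + (t/(1+t*s)) • v) := by
    rw [smul_add, smul_smul, smul_add, smul_smul, mul_div_cancel₀ _ h1', add_smul, one_smul]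
    abel
  rw [hvec, norm_smul, Real.norm_eq_abs, abs_of_pos h1, mul_pow]
  field_simp
  ring

lemma one_add_pos_eventually_Ioi (s : ℝ) : ∀ᶠ t : ℝ in 𝓝[>] (0:ℝ), 0 < 1 + t*s := by
  have h : Tendsto (fun t : ℝ => 1 + t*s) (𝓝[>] (0:ℝ)) (𝓝 1) := by
    have : Tendsto (fun t : ℝ => 1 + t*s) (𝓝 (0:ℝ)) (𝓝 (1 + 0*s)) :=
      (tendsto_const_nhds.add (tendsto_id.mul_const s))
    simpa using this.mono_left nhdsWithin_le_nhds
  exact h.eventually (eventually_gt_nhds (by norm_num))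

lemma one_add_pos_eventually_Iio (s : ℝ) : ∀ᶠ t : ℝ in 𝓝[<] (0:ℝ), 0 < 1 + t*s := by
  have h : Tendsto (fun t : ℝ => 1 + t*s) (𝓝[<] (0:ℝ)) (𝓝 1) := by
    have : Tendsto (fun t : ℝ => 1 + t*s) (𝓝 (0:ℝ)) (𝓝 (1 + 0*s)) :=
      (tendsto_const_nhds.add (tendsto_id.mul_const s))
    simpa using this.mono_left nhdsWithin_le_nhds
  exact h.eventually (eventually_gt_nhds (by norm_num))

lemma rhoP_smul_add (u v : X) (s : ℝ) : rhoP u (s • u + v) = s*‖u‖^2 + rhoP u v := by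
  have hq := rhoP_tendsto u v
  have hσ : Tendsto (fun t : ℝ => t/(1+t*s)) (𝓝[>] (0:ℝ)) (𝓝[>] (0:ℝ)) := by
    apply tendsto_nhdsWithin_of_tendsto_nhds_of_eventually_within
    · have : Tendsto (fun t : ℝ => t/(1+t*s)) (𝓝 (0:ℝ)) (𝓝 (0/(1+0*s))) :=
        tendsto_id.div (tendsto_const_nhds.add (tendsto_id.mul_const s)) (by norm_num)
      simpa using this.mono_left nhdsWithin_le_nhds
    · filter_upwards [one_add_pos_eventually_Ioi s, self_mem_nhdsWithin] with t h1 ht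
      exact mem_Ioi.mpr (div_pos (mem_Ioi.mp ht) h1)
  have h2 : Tendsto (fun t : ℝ => 1 + t*s) (𝓝[>] (0:ℝ)) (𝓝 1) := by
    have : Tendsto (fun t : ℝ => 1 + t*s) (𝓝 (0:ℝ)) (𝓝 (1 + 0*s)) :=
      (tendsto_const_nhds.add (tendsto_id.mul_const s))
    simpa using this.mono_left nhdsWithin_le_nhds
  have h3 : Tendsto (fun t : ℝ => (s + t*s^2/2)*‖u‖^2) (𝓝[>] (0:ℝ)) (𝓝 (s*‖u‖^2)) := by
    have : Tendsto (fun t : ℝ => (s + t*s^2/2)*‖u‖^2) (𝓝 (0:ℝ)) (𝓝 ((s + 0*s^2/2)*‖u‖^2)) :=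
      (tendsto_const_nhds.add ((tendsto_id.mul_const (s^2)).div_const 2)).mul_const _
    simpa using this.mono_left nhdsWithin_le_nhds
  have hcomp := hq.comp hσ
  have hfin := (h2.mul hcomp).add h3
  rw [one_mul] at hfin
  have key : Tendsto (fun t : ℝ => (‖u + t • (s • u + v)‖^2 - ‖u‖^2) / (2*t)) (𝓝[>] (0:ℝ))
      (𝓝 (s*‖u‖^2 + rhoP u v)) := by
    rw [add_comm (s*‖u‖^2)]
    refine hfin.congr' ?_
    filter_upwards [one_add_pos_eventually_Ioi s, self_mem_nhdsWithin] with t h1 ht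
    exact (q_translate u v s t (ne_of_gt (mem_Ioi.mp ht)) h1).symm
  rw [rhoP, key.limUnder_eq]

lemma rhoM_smul_add (u v : X) (s : ℝ) : rhoM u (s • u + v) = s*‖u‖^2 + rhoM u v := by
  have hq := rhoM_tendsto u v
  have hσ : Tendsto (fun t : ℝ => t/(1+t*s)) (𝓝[<] (0:ℝ)) (𝓝[<] (0:ℝ)) := by
    apply tendsto_nhdsWithin_of_tendsto_nhds_of_eventually_within
    · have : Tendsto (fun t : ℝ => t/(1+t*s)) (𝓝 (0:ℝ)) (𝓝 (0/(1+0*s))) :=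
        tendsto_id.div (tendsto_const_nhds.add (tendsto_id.mul_const s)) (by norm_num)
      simpa using this.mono_left nhdsWithin_le_nhds
    · filter_upwards [one_add_pos_eventually_Iio s, self_mem_nhdsWithin] with t h1 ht
      exact mem_Iio.mpr (div_neg_of_neg_of_pos (mem_Iio.mp ht) h1)
  have h2 : Tendsto (fun t : ℝ => 1 + t*s) (𝓝[<] (0:ℝ)) (𝓝 1) := by
    have : Tendsto (fun t : ℝ => 1 + t*s) (𝓝 (0:ℝ)) (𝓝 (1 + 0*s)) :=
      (tendsto_const_nhds.add (tendsto_id.mul_const s))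
    simpa using this.mono_left nhdsWithin_le_nhds
  have h3 : Tendsto (fun t : ℝ => (s + t*s^2/2)*‖u‖^2) (𝓝[<] (0:ℝ)) (𝓝 (s*‖u‖^2)) := by
    have : Tendsto (fun t : ℝ => (s + t*s^2/2)*‖u‖^2) (𝓝 (0:ℝ)) (𝓝 ((s + 0*s^2/2)*‖u‖^2)) :=
      (tendsto_const_nhds.add ((tendsto_id.mul_const (s^2)).div_const 2)).mul_const _
    simpa using this.mono_left nhdsWithin_le_nhds
  have hcomp := hq.comp hσ
  have hfin := (h2.mul hcomp).add h3
  rw [one_mul] at hfin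
  have key : Tendsto (fun t : ℝ => (‖u + t • (s • u + v)‖^2 - ‖u‖^2) / (2*t)) (𝓝[<] (0:ℝ))
      (𝓝 (s*‖u‖^2 + rhoM u v)) := by
    rw [add_comm (s*‖u‖^2)]
    refine hfin.congr' ?_
    filter_upwards [one_add_pos_eventually_Iio s, self_mem_nhdsWithin] with t h1 ht
    exact (q_translate u v s t (ne_of_lt (mem_Iio.mp ht)) h1).symm
  rw [rhoM, key.limUnder_eq]

lemma rhoP_zero (u : X) : rhoP u 0 = 0 := by
  have key : Tendsto (fun t : ℝ => (‖u + t • (0:X)‖^2 - ‖u‖^2) / (2*t)) (𝓝[>] (0:ℝ)) (𝓝 0) := by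
    have : (fun t : ℝ => (‖u + t • (0:X)‖^2 - ‖u‖^2) / (2*t)) = fun _ => (0:ℝ) := by
      ext t; simp
    rw [this]; exact tendsto_const_nhds
  rw [rhoP, key.limUnder_eq]

lemma rhoM_zero (u : X) : rhoM u 0 = 0 := by
  have key : Tendsto (fun t : ℝ => (‖u + t • (0:X)‖^2 - ‖u‖^2) / (2*t)) (𝓝[<] (0:ℝ)) (𝓝 0) := by
    have : (fun t : ℝ => (‖u + t • (0:X)‖^2 - ‖u‖^2) / (2*t)) = fun _ => (0:ℝ) := by
      ext t; simp
    rw [this]; exact tendsto_const_nhds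
  rw [rhoM, key.limUnder_eq]

lemma rhoAB_smul_add (α β : ℝ) (u v : X) (s : ℝ) :
    rhoAB α β u (s • u + v) = s*(α+β)*‖u‖^2 + rhoAB α β u v := by
  rw [rhoAB, rhoAB, rhoP_smul_add, rhoM_smul_add]; ring

lemma rhoAB_smul_self (α β : ℝ) (u : X) (s : ℝ) :
    rhoAB α β u (s • u) = s*(α+β)*‖u‖^2 := by
  have := rhoAB_smul_add α β u 0 s
  simpa [rhoAB, rhoP_zero, rhoM_zero] using this

lemma rhoP_lower (y x : X) {t : ℝ} (ht : 0 < t) :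
    (‖y + t • x‖^2 - ‖y‖^2)/(2*t) ≤ rhoP (y + t • x) x := by
  have hconv := myConvexF y x
  refine ge_of_tendsto (rhoP_tendsto (y + t • x) x) ?_
  filter_upwards [self_mem_nhdsWithin] with τ hτ
  have hτ0 : 0 < τ := hτ
  have hsec := hconv.secant_mono (a := t) (x := 0) (y := t+τ) (mem_univ _) (mem_univ _)
    (mem_univ _) (by linarith) (by linarith) (by linarith)
  simp only [zero_smul, add_zero, add_sub_cancel_left, zero_sub] at hsec
  have hrw : y + t • x + τ • x = y + (t+τ) • x := by rw [add_smul]; abel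
  rw [hrw]
  set A := ‖y‖^2; set B := ‖y + t • x‖^2; set C := ‖y + (t+τ) • x‖^2
  have e1 : (A - B)/(-t) = (B - A)/t := by rw [div_neg, ← neg_div, neg_sub]
  rw [e1] at hsec
  have e2 : (B - A)/(2*t) = ((B - A)/t)/2 := by ring
  have e3 : (C - B)/(2*τ) = ((C - B)/τ)/2 := by ring
  rw [e2, e3]
  linarith

lemma rhoM_lower (y x : X) {t : ℝ} (ht : 0 < t) :
    (‖y + t • x‖^2 - ‖y‖^2)/(2*t) ≤ rhoM (y + t • x) x := by
  have hconv := myConvexF y x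
  refine ge_of_tendsto (rhoM_tendsto (y + t • x) x) ?_
  filter_upwards [Ioo_mem_nhdsLT (show -t < (0:ℝ) by linarith)] with τ hτ
  obtain ⟨hτ1, hτ2⟩ := hτ
  have hsec := hconv.secant_mono (a := t) (x := 0) (y := t+τ) (mem_univ _) (mem_univ _)
    (mem_univ _) (by linarith) (by linarith) (by linarith)
  simp only [zero_smul, add_zero, add_sub_cancel_left, zero_sub] at hsec
  have hrw : y + t • x + τ • x = y + (t+τ) • x := by rw [add_smul]; abel
  rw [hrw]
  set A := ‖y‖^2; set B := ‖y + t • x‖^2; set C := ‖y + (t+τ) • x‖^2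
  have e1 : (A - B)/(-t) = (B - A)/t := by rw [div_neg, ← neg_div, neg_sub]
  rw [e1] at hsec
  have e2 : (B - A)/(2*t) = ((B - A)/t)/2 := by ring
  have e3 : (C - B)/(2*τ) = ((C - B)/τ)/2 := by ring
  rw [e2, e3]
  linarith

end Aux

theorem stmt_15 {X Y : Type*} [NormedAddCommGroup X] [NormedSpace ℝ X]
    [NormedAddCommGroup Y] [NormedSpace ℝ Y]
    (α β : ℝ) (hα : α ∈ Set.Ico (0:ℝ) 1) (hβ : β ∈ Set.Ico (0:ℝ) 1)
    (hab : 0 < α + β) (hab1 : α + β < 1)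
    (T : X →L[ℝ] Y) (hT : T ≠ 0)
    (hpres : ∀ u v : X, rhoAB α β u v = 0 → rhoAB α β (T u) (T v) = 0) :
    Function.Injective T := by
  have hab' : α + β ≠ 0 := ne_of_gt hab
  -- reduce to trivial kernel
  have key : ∀ x : X, T x = 0 → x = 0 := by
    intro x hx
    by_contra hx0
    -- pick y with T y ≠ 0
    obtain ⟨y, hy⟩ : ∃ y : X, T y ≠ 0 := by
      by_contra h
      push_neg at h
      exact hT (by ext z; simp [h z])
    have hxn : (0:ℝ) < ‖x‖ := norm_pos_iff.mpr hx0
    set t : ℝ := (2*‖y‖+1)/‖x‖ with htdef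
    have ht : 0 < t := div_pos (by positivity) hxn
    set u : X := y + t • x with hu
    have htx : t * ‖x‖ = 2*‖y‖+1 := div_mul_cancel₀ _ (ne_of_gt hxn)
    have hun : ‖y‖ + 1 ≤ ‖u‖ := by
      have h1 : ‖t • x‖ ≤ ‖u‖ + ‖y‖ := by
        calc ‖t • x‖ = ‖u - y‖ := by rw [hu]; congr 1; abel
        _ ≤ ‖u‖ + ‖y‖ := norm_sub_le _ _
      rw [norm_smul, Real.norm_eq_abs, abs_of_pos ht, htx] at h1
      linarith
    have hu0 : u ≠ 0 := by
      intro h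
      rw [h, norm_zero] at hun
      linarith [norm_nonneg y]
    have hunz : ‖u‖ ≠ 0 := norm_ne_zero_iff.mpr hu0
    have hTu : T u = T y := by rw [hu]; simp [hx]
    -- orthogonality trick: rhoAB α β u x = 0
    set s : ℝ := -(rhoAB α β u x)/((α+β)*‖u‖^2) with hs
    have h1 : rhoAB α β u (s • u + x) = 0 := by
      rw [rhoAB_smul_add, hs]
      field_simp
      ring
    have h2 := hpres u (s • u + x) h1
    have hTv : T (s • u + x) = s • T y := by rw [map_add, map_smul, hx, hTu, add_zero]
    rw [hTu, hTv, rhoAB_smul_self] at h2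
    have hTyn : ‖T y‖^2 ≠ 0 := pow_ne_zero _ (norm_ne_zero_iff.mpr hy)
    have hs0 : s = 0 := by
      rcases mul_eq_zero.mp h2 with h | h
      · rcases mul_eq_zero.mp h with h' | h'
        · exact h'
        · exact absurd h' hab'
      · exact absurd h hTyn
    have hR : rhoAB α β u x = 0 := by
      rw [hs, div_eq_zero_iff] at hs0
      rcases hs0 with h | h
      · linarith [neg_eq_zero.mp h]
      · exact absurd h (by positivity)
    -- lower bound contradiction
    set L : ℝ := (‖u‖^2 - ‖y‖^2)/(2*t) with hL
    have hLpos : 0 < L := by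
      apply div_pos _ (by linarith)
      have : (‖y‖+1)^2 ≤ ‖u‖^2 := by
        have := norm_nonneg y
        nlinarith
      nlinarith [norm_nonneg y]
    have hP : L ≤ rhoP u x := by
      have := rhoP_lower y x ht
      rwa [← hu] at this
    have hM : L ≤ rhoM u x := by
      have := rhoM_lower y x ht
      rwa [← hu] at this
    have hα' : α * L ≤ α * rhoM u x := mul_le_mul_of_nonneg_left hM hα.1
    have hβ' : β * L ≤ β * rhoP u x := mul_le_mul_of_nonneg_left hP hβ.1
    have hsum : (α+β)*L ≤ rhoAB α β u x := by
      rw [rhoAB]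
      nlinarith
    have : 0 < (α+β)*L := mul_pos hab hLpos
    rw [hR] at hsum
    linarith
  intro a b h
  have : a - b = 0 := key (a - b) (by rw [map_sub, h, sub_self])
  exact sub_eq_zero.mp this
end
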